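/- Let G = (V, E) be a graph with a linear order < on its edge set E. Then the map sending a triple (F, A_i, A_e) — where F = (V, A_f) is a spanning forest of G, A_i is a subset of the internally active edges of F, and A_e is a subset of the externally active edges of F — to the edge set (A_f \ A_i) ∪ A_e, is a bijection onto the power set 2^E of E. -/

import Mathlib

set_option linter.unusedSectionVars false


open Finset

attribute [local instance] Classical.propDecidable

/-- A multigraph on vertex type `V` with edge index type `E` is given by a map
`ends : E → Sym2 V` (loops and parallel edges are allowed).  For an edge subset
`A ⊆ E`, `edgeGraph ends A` is the simple graph on `V` whose adjacency is
witnessed by some edge of `A`; it determines the connected components of the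
spanning subgraph `(V, A)`. -/
def edgeGraph {V E : Type} (ends : E → Sym2 V) (A : Finset E) : SimpleGraph V where
  Adj a b := a ≠ b ∧ ∃ e ∈ A, ends e = s(a, b)
  symm := by
    refine ⟨?_⟩
    rintro a b ⟨hab, e, he, hs⟩
    exact ⟨Ne.symm hab, e, he, by rw [hs, Sym2.eq_swap]⟩
  loopless := by refine ⟨?_⟩; rintro a ⟨h, -⟩; exact h rfl

/-- `kc ends A` is the number of connected components of the spanning subgraph `(V, A)`. -/
noncomputable def kc {V E : Type} (ends : E → Sym2 V) (A : Finset E) : ℕ :=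
  Nat.card (edgeGraph ends A).ConnectedComponent

/-- `(V, A)` is a spanning forest of `(V, E)`: it is a forest
(`|A| + k((V,A)) = |V|`, which rules out loops, parallel edges and cycles)
with as many connected components as the whole graph. -/
def IsSpanningForest {V E : Type} [Fintype V] [Fintype E] (ends : E → Sym2 V)
    (A : Finset E) : Prop :=
  A.card + kc ends A = Fintype.card V ∧ kc ends A = kc ends Finset.univ

/-- `F - e + f`. -/
def swapEdge {E : Type} [DecidableEq E] (A : Finset E) (e f : E) : Finset E :=
  insert f (A.erase e)

/-- `e` is internally active in the spanning forest `(V, A)`. -/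
def InternallyActive {V E : Type} [Fintype V] [Fintype E] [DecidableEq E] [LinearOrder E]
    (ends : E → Sym2 V) (A : Finset E) (e : E) : Prop :=
  e ∈ A ∧ ¬ ∃ f, f ∉ A ∧ e < f ∧ IsSpanningForest ends (swapEdge A e f)

/-- `f` is externally active in the spanning forest `(V, A)`. -/
def ExternallyActive {V E : Type} [Fintype V] [Fintype E] [DecidableEq E] [LinearOrder E]
    (ends : E → Sym2 V) (A : Finset E) (f : E) : Prop :=
  f ∉ A ∧ ¬ ∃ e, e ∈ A ∧ f < e ∧ IsSpanningForest ends (swapEdge A e f)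

/-- The set `E_i(F)` of internally active edges of the spanning forest `F = (V, A)`. -/
noncomputable def intAct {V E : Type} [Fintype V] [Fintype E] [DecidableEq E] [LinearOrder E]
    (ends : E → Sym2 V) (A : Finset E) : Finset E :=
  Finset.univ.filter (InternallyActive ends A)

/-- The set `E_e(F)` of externally active edges of the spanning forest `F = (V, A)`. -/
noncomputable def extAct {V E : Type} [Fintype V] [Fintype E] [DecidableEq E] [LinearOrder E]
    (ends : E → Sym2 V) (A : Finset E) : Finset E :=
  Finset.univ.filter (ExternallyActive ends A)

section Crapo

variable {V E : Type} [DecidableEq E]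

/-- `A` spans the edge `e`: the endpoints of `e` are connected in `(V, A)`. -/
def spans (ends : E → Sym2 V) (A : Finset E) (e : E) : Prop :=
  ∀ x y, ends e = s(x, y) → (edgeGraph ends A).Reachable x y

variable {ends : E → Sym2 V}

lemma edgeGraph_mono {A B : Finset E} (h : A ⊆ B) : edgeGraph ends A ≤ edgeGraph ends B := by
  rintro a b ⟨hab, e, he, hs⟩
  exact ⟨hab, e, h he, hs⟩

lemma reach_mono {A B : Finset E} (h : A ⊆ B) {x y : V}
    (hr : (edgeGraph ends A).Reachable x y) : (edgeGraph ends B).Reachable x y := by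
  have := hr.map (SimpleGraph.Hom.ofLE (edgeGraph_mono h))
  exact this

lemma spans_of_mem {A : Finset E} {e : E} (he : e ∈ A) : spans ends A e := by
  intro x y hxy
  by_cases hxyeq : x = y
  · subst hxyeq; exact SimpleGraph.Reachable.refl x
  · exact SimpleGraph.Adj.reachable ⟨hxyeq, e, he, hxy⟩

lemma spans_mono {A B : Finset E} (h : A ⊆ B) {e : E} (hs : spans ends A e) :
    spans ends B e := fun x y hxy => reach_mono h (hs x y hxy)

/-- If every edge of `B` is spanned by `A`, then `A`-reachability dominates
`B`-reachability. -/
lemma reach_trans_all {A B : Finset E} (h : ∀ f ∈ B, spans ends A f) {x y : V}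
    (hr : (edgeGraph ends B).Reachable x y) : (edgeGraph ends A).Reachable x y := by
  rw [SimpleGraph.reachable_iff_reflTransGen] at hr
  induction hr with
  | refl => exact SimpleGraph.Reachable.refl x
  | tail _ hadj ih =>
    obtain ⟨-, g, hg, hgs⟩ := hadj
    exact ih.trans (h g hg _ _ hgs)

lemma spans_trans {A B : Finset E} (h : ∀ f ∈ B, spans ends A f) {e : E}
    (hs : spans ends B e) : spans ends A e :=
  fun x y hxy => reach_trans_all h (hs x y hxy)

lemma reach_insert_decomp {A : Finset E} {f : E} {u v x y : V} (huv : ends f = s(u, v))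
    (hr : (edgeGraph ends (insert f A)).Reachable x y) :
    (edgeGraph ends A).Reachable x y ∨
      ((edgeGraph ends A).Reachable x u ∧ (edgeGraph ends A).Reachable v y) ∨
      ((edgeGraph ends A).Reachable x v ∧ (edgeGraph ends A).Reachable u y) := by
  rw [SimpleGraph.reachable_iff_reflTransGen] at hr
  induction hr with
  | refl => exact Or.inl (SimpleGraph.Reachable.refl x)
  | @tail b c _ hadj ih =>
    obtain ⟨hbc, g, hg, hgs⟩ := hadj
    rcases Finset.mem_insert.mp hg with rfl | hgA
    · -- the step uses edge f
      rw [huv] at hgs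
      rcases Sym2.eq_iff.mp hgs with ⟨rfl, rfl⟩ | ⟨rfl, rfl⟩
      · rcases ih with h1 | ⟨h1, h2⟩ | ⟨h1, h2⟩
        · exact Or.inr (Or.inl ⟨h1, SimpleGraph.Reachable.refl _⟩)
        · exact Or.inl (h1.trans h2.symm)
        · exact Or.inl h1
      · rcases ih with h1 | ⟨h1, h2⟩ | ⟨h1, h2⟩
        · exact Or.inr (Or.inr ⟨h1, SimpleGraph.Reachable.refl _⟩)
        · exact Or.inl h1
        · exact Or.inl (h1.trans h2.symm)
    · -- the step stays in A
      have hstep : (edgeGraph ends A).Reachable b c := SimpleGraph.Adj.reachable ⟨hbc, g, hgA, hgs⟩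
      rcases ih with h1 | ⟨h1, h2⟩ | ⟨h1, h2⟩
      · exact Or.inl (h1.trans hstep)
      · exact Or.inr (Or.inl ⟨h1, h2.trans hstep⟩)
      · exact Or.inr (Or.inr ⟨h1, h2.trans hstep⟩)

lemma not_spans_iff {A : Finset E} {e : E} :
    ¬ spans ends A e ↔ ∃ x y, ends e = s(x, y) ∧ ¬ (edgeGraph ends A).Reachable x y := by
  unfold spans; push_neg; rfl

/-- The exchange property. -/
lemma spans_exchange {A : Finset E} {e f : E} (hne : ¬ spans ends A e)
    (hsp : spans ends (insert f A) e) : spans ends (insert e A) f := by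
  obtain ⟨x, y, hxy, hnr⟩ := not_spans_iff.mp hne
  intro u v huv
  have hxny : x ≠ y := fun h => hnr (h ▸ SimpleGraph.Reachable.refl x)
  have hadj : (edgeGraph ends (insert e A)).Adj x y :=
    ⟨hxny, e, Finset.mem_insert_self e A, hxy⟩
  have hmono : ∀ {a b : V}, (edgeGraph ends A).Reachable a b →
      (edgeGraph ends (insert e A)).Reachable a b :=
    fun h => reach_mono (Finset.subset_insert e A) h
  rcases reach_insert_decomp huv (hsp x y hxy) with h1 | ⟨h1, h2⟩ | ⟨h1, h2⟩
  · exact absurd h1 hnr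
  · exact ((hmono h1).symm.trans (hadj.reachable.trans (hmono h2).symm))
  · exact (hmono h2).trans (hadj.reachable.symm.trans (hmono h1))

section KC

/-- If every edge of `B ⊇ A` is spanned by `A` then `(V,A)` and `(V,B)` have the
same number of connected components. -/
lemma kc_eq_of_spans {A B : Finset E} (hAB : A ⊆ B) (h : ∀ f ∈ B, spans ends A f) :
    kc ends B = kc ends A := by
  apply Nat.card_congr
  refine ⟨SimpleGraph.ConnectedComponent.lift
      (fun v => (edgeGraph ends A).connectedComponentMk v) ?_,
    SimpleGraph.ConnectedComponent.map
      (SimpleGraph.Hom.ofLE (edgeGraph_mono hAB)), ?_, ?_⟩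
  · intro v w p _
    exact SimpleGraph.ConnectedComponent.sound (reach_trans_all h ⟨p⟩)
  · refine SimpleGraph.ConnectedComponent.ind fun v => ?_
    rfl
  · refine SimpleGraph.ConnectedComponent.ind fun v => ?_
    rfl

lemma kc_insert_of_spans {A : Finset E} {e : E} (h : spans ends A e) :
    kc ends (insert e A) = kc ends A := by
  refine kc_eq_of_spans (Finset.subset_insert e A) fun f hf => ?_
  rcases Finset.mem_insert.mp hf with rfl | hfA
  · exact h
  · exact spans_of_mem hfA

lemma nat_card_erase {α : Type} [Finite α] (a : α) :
    Nat.card α = Nat.card {x : α // x ≠ a} + 1 := by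
  have : Fintype α := Fintype.ofFinite α
  rw [Nat.card_eq_fintype_card, Nat.card_eq_fintype_card]
  classical
  have h1 : Fintype.card {x : α // x ≠ a} = Fintype.card α - 1 := by
    have := Fintype.card_subtype_compl (fun x : α => x = a)
    simp only [Fintype.card_subtype_eq] at this
    exact this
  have h2 : 1 ≤ Fintype.card α := Fintype.card_pos_iff.mpr ⟨a⟩
  omega

lemma kc_insert_of_not_spans [Finite V] {A : Finset E} {e : E} (h : ¬ spans ends A e) :
    kc ends A = kc ends (insert e A) + 1 := by
  obtain ⟨u, v, huv, hnr⟩ := not_spans_iff.mp h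
  have hune : u ≠ v := fun hh => hnr (hh ▸ SimpleGraph.Reachable.refl u)
  set G := edgeGraph ends A with hG
  set G' := edgeGraph ends (insert e A) with hG'
  have hmono : ∀ {a b : V}, G.Reachable a b → G'.Reachable a b :=
    fun hh => reach_mono (Finset.subset_insert e A) hh
  have hadj : G'.Adj u v := ⟨hune, e, Finset.mem_insert_self e A, huv⟩
  -- the merging map
  have hwd : ∀ (a b : V) (p : G'.Walk a b), p.IsPath →
      (if G.Reachable a u then G.connectedComponentMk v else G.connectedComponentMk a) =
      (if G.Reachable b u then G.connectedComponentMk v else G.connectedComponentMk b) := by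
    intro a b p _
    rcases reach_insert_decomp huv (⟨p⟩ : G'.Reachable a b) with h1 | ⟨h1, h2⟩ | ⟨h1, h2⟩
    · by_cases hau : G.Reachable a u
      · rw [if_pos hau, if_pos (h1.symm.trans hau)]
      · rw [if_neg hau, if_neg (fun hb => hau (h1.trans hb))]
        exact SimpleGraph.ConnectedComponent.sound h1
    · rw [if_pos h1, if_neg (fun hb => hnr ((h2.trans hb).symm))]
      exact SimpleGraph.ConnectedComponent.sound h2
    · rw [if_neg (fun ha => hnr (ha.symm.trans h1)), if_pos h2.symm]
      exact SimpleGraph.ConnectedComponent.sound h1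
  let F : G'.ConnectedComponent → G.ConnectedComponent :=
    SimpleGraph.ConnectedComponent.lift
      (fun a => if G.Reachable a u then G.connectedComponentMk v else G.connectedComponentMk a) hwd
  have hFne : ∀ c, F c ≠ G.connectedComponentMk u := by
    refine SimpleGraph.ConnectedComponent.ind fun a => ?_
    show (if G.Reachable a u then _ else _) ≠ _
    by_cases hau : G.Reachable a u
    · rw [if_pos hau]
      intro hcon
      exact hnr (SimpleGraph.ConnectedComponent.exact hcon).symm
    · rw [if_neg hau]
      intro hcon
      exact hau (SimpleGraph.ConnectedComponent.exact hcon)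
  let hom : G →g G' := SimpleGraph.Hom.ofLE (edgeGraph_mono (Finset.subset_insert e A))
  have key : Nat.card G'.ConnectedComponent
      = Nat.card {c : G.ConnectedComponent // c ≠ G.connectedComponentMk u} := by
    apply Nat.card_congr
    refine ⟨fun c => ⟨F c, hFne c⟩, fun c => (c.1).map hom, ?_, ?_⟩
    · refine SimpleGraph.ConnectedComponent.ind fun a => ?_
      show ((if G.Reachable a u then G.connectedComponentMk v
          else G.connectedComponentMk a)).map hom = G'.connectedComponentMk a
      by_cases hau : G.Reachable a u
      · rw [if_pos hau]
        show G'.connectedComponentMk v = G'.connectedComponentMk a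
        exact SimpleGraph.ConnectedComponent.sound
          (hadj.reachable.symm.trans (hmono hau).symm)
      · rw [if_neg hau]; rfl
    · have hright : ∀ (c : G.ConnectedComponent), c ≠ G.connectedComponentMk u →
          F (c.map hom) = c := by
        refine SimpleGraph.ConnectedComponent.ind fun a => ?_
        intro ha
        show (if G.Reachable a u then _ else _) = _
        rw [if_neg (fun hau => ha (SimpleGraph.ConnectedComponent.sound hau))]
        rfl
      rintro ⟨c, hc⟩
      exact Subtype.ext (hright c hc)
  have : Finite G.ConnectedComponent := Quot.finite _
  rw [kc, kc, key, ← nat_card_erase]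

lemma kc_empty : kc ends (∅ : Finset E) = Nat.card V := by
  apply Nat.card_congr
  refine ⟨SimpleGraph.ConnectedComponent.lift id ?_, fun v => (edgeGraph ends ∅).connectedComponentMk v, ?_, fun v => rfl⟩
  · intro v w p _
    have : (edgeGraph ends (∅ : Finset E)).Reachable v w := ⟨p⟩
    rw [SimpleGraph.reachable_iff_reflTransGen] at this
    induction this with
    | refl => rfl
    | tail _ hadj ih => obtain ⟨-, g, hg, -⟩ := hadj; exact absurd hg (Finset.notMem_empty g)
  · refine SimpleGraph.ConnectedComponent.ind fun v => rfl

end KC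

section Forest

/-- `(V, A)` is a forest: no edge is spanned by the others. -/
def Indep (ends : E → Sym2 V) (A : Finset E) : Prop :=
  ∀ e ∈ A, ¬ spans ends (A.erase e) e

/-- `(V, A)` is a spanning forest, expressed via `spans`. -/
def IsBase (ends : E → Sym2 V) (A : Finset E) : Prop :=
  Indep ends A ∧ ∀ e, spans ends A e

variable [Fintype V]

lemma indep_anti {A B : Finset E} (h : A ⊆ B) (hB : Indep ends B) : Indep ends A :=
  fun e he hsp => hB e (h he) (spans_mono (Finset.erase_subset_erase e h) hsp)

lemma card_add_kc_ge (A : Finset E) : Fintype.card V ≤ A.card + kc ends A := by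
  induction A using Finset.induction_on with
  | empty => simp [kc_empty, Nat.card_eq_fintype_card]
  | @insert e A he ih =>
    by_cases hs : spans ends A e
    · rw [kc_insert_of_spans hs, Finset.card_insert_of_notMem he]; omega
    · have h2 := kc_insert_of_not_spans hs
      rw [Finset.card_insert_of_notMem he]; omega

lemma indep_iff {A : Finset E} :
    Indep ends A ↔ A.card + kc ends A = Fintype.card V := by
  constructor
  · induction A using Finset.induction_on with
    | empty => intro _; simp [kc_empty, Nat.card_eq_fintype_card]
    | @insert e A he ih =>
      intro hI
      have hInd : Indep ends A := indep_anti (Finset.subset_insert e A) hI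
      have hne : ¬ spans ends A e := by
        have := hI e (Finset.mem_insert_self e A)
        rwa [Finset.erase_insert he] at this
      have h2 := kc_insert_of_not_spans (ends := ends) hne
      rw [Finset.card_insert_of_notMem he]
      have h3 := ih hInd
      omega
  · intro h e he hsp
    have hA : insert e (A.erase e) = A := Finset.insert_erase he
    have h1 : kc ends A = kc ends (A.erase e) := by
      have h0 := kc_insert_of_spans (ends := ends) hsp
      rwa [hA] at h0
    have h2 := card_add_kc_ge (ends := ends) (A.erase e)
    have h3 : (A.erase e).card + 1 = A.card := Finset.card_erase_add_one he
    omega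

variable [Fintype E]

lemma reach_of_kc_eq {A B : Finset E} (hAB : A ⊆ B) (h : kc ends A = kc ends B)
    {x y : V} (hr : (edgeGraph ends B).Reachable x y) : (edgeGraph ends A).Reachable x y := by
  letI : Fintype (edgeGraph ends A).ConnectedComponent :=
    @Fintype.ofFinite _ (Quot.finite _)
  letI : Fintype (edgeGraph ends B).ConnectedComponent :=
    @Fintype.ofFinite _ (Quot.finite _)
  let hom : edgeGraph ends A →g edgeGraph ends B :=
    SimpleGraph.Hom.ofLE (edgeGraph_mono hAB)
  let π : (edgeGraph ends A).ConnectedComponent → (edgeGraph ends B).ConnectedComponent :=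
    SimpleGraph.ConnectedComponent.map hom
  have hsurj : Function.Surjective π := by
    refine SimpleGraph.ConnectedComponent.ind fun w => ?_
    exact ⟨(edgeGraph ends A).connectedComponentMk w, rfl⟩
  have hcard : Fintype.card (edgeGraph ends A).ConnectedComponent =
      Fintype.card (edgeGraph ends B).ConnectedComponent := by
    have h1 := Nat.card_eq_fintype_card (α := (edgeGraph ends A).ConnectedComponent)
    have h2 := Nat.card_eq_fintype_card (α := (edgeGraph ends B).ConnectedComponent)
    unfold kc at h
    omega
  have hbij : Function.Bijective π :=
    (Fintype.bijective_iff_surjective_and_card π).mpr ⟨hsurj, hcard⟩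
  have hinj := hbij.injective (a₁ := (edgeGraph ends A).connectedComponentMk x)
    (a₂ := (edgeGraph ends A).connectedComponentMk y)
    (SimpleGraph.ConnectedComponent.sound hr)
  exact SimpleGraph.ConnectedComponent.exact hinj

lemma spanning_iff {A : Finset E} :
    (∀ e, spans ends A e) ↔ kc ends A = kc ends (Finset.univ : Finset E) := by
  constructor
  · intro h
    exact (kc_eq_of_spans (Finset.subset_univ A) fun f _ => h f).symm
  · intro h e x y hxy
    exact reach_of_kc_eq (Finset.subset_univ A) h (spans_of_mem (Finset.mem_univ e) x y hxy)

lemma isSF_iff {A : Finset E} : IsSpanningForest ends A ↔ IsBase ends A := by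
  unfold IsSpanningForest IsBase
  rw [indep_iff, spanning_iff]

end Forest

section Matroid

/-- Extraction of a circuit: a minimal spanning subset, with its basic properties. -/
lemma exists_circuit {A : Finset E} {x : E} (hI : Indep ends A) (hsp : spans ends A x) :
    ∃ C ⊆ A, spans ends C x ∧ (∀ g ∈ C, ¬ spans ends (A.erase g) x) ∧
      (∀ g ∈ C, spans ends (insert x (C.erase g)) g) := by
  have hne : (A.powerset.filter fun C => spans ends C x).Nonempty :=
    ⟨A, by simp only [Finset.mem_filter, Finset.mem_powerset]; exact ⟨Finset.Subset.refl A, hsp⟩⟩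
  obtain ⟨C, hCmem, hCmin⟩ := Finset.exists_min_image _ Finset.card hne
  rw [Finset.mem_filter, Finset.mem_powerset] at hCmem
  obtain ⟨hCA, hCsp⟩ := hCmem
  have hmin : ∀ g ∈ C, ¬ spans ends (C.erase g) x := by
    intro g hg hcon
    have hmem : C.erase g ∈ A.powerset.filter fun C => spans ends C x := by
      rw [Finset.mem_filter, Finset.mem_powerset]
      exact ⟨(Finset.erase_subset g C).trans hCA, hcon⟩
    have h1 := hCmin _ hmem
    have hlt : (C.erase g).card < C.card := Finset.card_erase_lt_of_mem hg
    omega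
  have hsym : ∀ g ∈ C, spans ends (insert x (C.erase g)) g := by
    intro g hg
    refine spans_exchange (hmin g hg) ?_
    rw [Finset.insert_erase hg]; exact hCsp
  refine ⟨C, hCA, hCsp, ?_, hsym⟩
  intro g hg hcon
  have hAg : spans ends (A.erase g) g := by
    refine spans_trans (B := insert x (C.erase g)) ?_ (hsym g hg)
    intro f hf
    rcases Finset.mem_insert.mp hf with rfl | hf'
    · exact hcon
    · exact spans_of_mem (Finset.mem_erase.mpr
        ⟨(Finset.mem_erase.mp hf').1, hCA (Finset.mem_erase.mp hf').2⟩)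
  exact hI g (hCA hg) hAg

/-- Characterisation of when a basis exchange yields a basis. -/
lemma swap_base_iff {A : Finset E} {e f : E} (hA : IsBase ends A) (he : e ∈ A) (hf : f ∉ A) :
    IsBase ends (insert f (A.erase e)) ↔ ¬ spans ends (A.erase e) f := by
  have hfae : f ∉ A.erase e := fun hmem => hf (Finset.mem_of_mem_erase hmem)
  constructor
  · rintro ⟨hI, -⟩
    have h1 := hI f (Finset.mem_insert_self f _)
    rwa [Finset.erase_insert hfae] at h1
  · intro hns
    obtain ⟨hI, hspall⟩ := hA
    constructor
    · intro g hg hsp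
      rcases Finset.mem_insert.mp hg with rfl | hg'
      · rw [Finset.erase_insert hfae] at hsp
        exact hns hsp
      · have hgA : g ∈ A := Finset.mem_of_mem_erase hg'
        have hgnef : f ≠ g := fun h => hf (h ▸ hgA)
        have hsp' : spans ends (insert f ((A.erase e).erase g)) g := by
          rwa [Finset.erase_insert_of_ne hgnef] at hsp
        have hX : ¬ spans ends ((A.erase e).erase g) g := fun hcon =>
          hI g hgA (spans_mono (Finset.erase_subset_erase g
            (Finset.erase_subset e A)) hcon)
        have hexch := spans_exchange hX hsp'
        rw [Finset.insert_erase hg'] at hexch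
        exact hns hexch
    · intro x
      have hAsp : ∀ g ∈ A, spans ends (insert f (A.erase e)) g := by
        intro g hg
        by_cases hge : g = e
        · subst hge
          have h1 : spans ends (insert g (A.erase g)) f := by
            rw [Finset.insert_erase he]; exact hspall f
          exact spans_exchange hns h1
        · exact spans_of_mem (Finset.mem_insert_of_mem (Finset.mem_erase.mpr ⟨hge, hg⟩))
      exact spans_trans hAsp (hspall x)

end Matroid

section Circuits

/-- A minimal spanning subset, together with the circuit symmetry property. -/
lemma exists_min_spanning {A : Finset E} {x : E} (hsp : spans ends A x) :
    ∃ C ⊆ A, spans ends C x ∧ (∀ g ∈ C, spans ends (insert x (C.erase g)) g) := by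
  have hne : (A.powerset.filter fun C => spans ends C x).Nonempty :=
    ⟨A, by simp only [Finset.mem_filter, Finset.mem_powerset]; exact ⟨Finset.Subset.refl A, hsp⟩⟩
  obtain ⟨C, hCmem, hCmin⟩ := Finset.exists_min_image _ Finset.card hne
  rw [Finset.mem_filter, Finset.mem_powerset] at hCmem
  obtain ⟨hCA, hCsp⟩ := hCmem
  have hmin : ∀ g ∈ C, ¬ spans ends (C.erase g) x := by
    intro g hg hcon
    have hmem : C.erase g ∈ A.powerset.filter fun C => spans ends C x := by
      rw [Finset.mem_filter, Finset.mem_powerset]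
      exact ⟨(Finset.erase_subset g C).trans hCA, hcon⟩
    have h1 := hCmin _ hmem
    have hlt : (C.erase g).card < C.card := Finset.card_erase_lt_of_mem hg
    omega
  refine ⟨C, hCA, hCsp, fun g hg => ?_⟩
  refine spans_exchange (hmin g hg) ?_
  rw [Finset.insert_erase hg]; exact hCsp

/-- Elements of a circuit contained in an independent set `A` are not spanned
by the rest of `A`. -/
lemma circuit_fund {A C : Finset E} {x : E} (hI : Indep ends A) (hCA : C ⊆ A)
    (hsym : ∀ g ∈ C, spans ends (insert x (C.erase g)) g) :
    ∀ g ∈ C, ¬ spans ends (A.erase g) x := by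
  intro g hg hcon
  have hAg : spans ends (A.erase g) g := by
    refine spans_trans (B := insert x (C.erase g)) ?_ (hsym g hg)
    intro f hf
    rcases Finset.mem_insert.mp hf with rfl | hf'
    · exact hcon
    · exact spans_of_mem (Finset.mem_erase.mpr
        ⟨(Finset.mem_erase.mp hf').1, hCA (Finset.mem_erase.mp hf').2⟩)
  exact hI g (hCA hg) hAg

end Circuits

section Activity

variable [Fintype V] [Fintype E] [LinearOrder E]

lemma internallyActive_iff {A : Finset E} (hA : IsSpanningForest ends A) {e : E} :
    InternallyActive ends A e ↔ e ∈ A ∧ ∀ f, f ∉ A → e < f → spans ends (A.erase e) f := by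
  unfold InternallyActive swapEdge
  constructor
  · rintro ⟨he, hno⟩
    refine ⟨he, fun f hf hlt => ?_⟩
    by_contra hns
    exact hno ⟨f, hf, hlt, isSF_iff.mpr ((swap_base_iff (isSF_iff.mp hA) he hf).mpr hns)⟩
  · rintro ⟨he, hall⟩
    refine ⟨he, ?_⟩
    rintro ⟨f, hf, hlt, hSF⟩
    exact (swap_base_iff (isSF_iff.mp hA) he hf).mp (isSF_iff.mp hSF) (hall f hf hlt)

lemma externallyActive_iff {A : Finset E} (hA : IsSpanningForest ends A) {f : E} :
    ExternallyActive ends A f ↔ f ∉ A ∧ ∀ e, e ∈ A → f < e → spans ends (A.erase e) f := by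
  unfold ExternallyActive swapEdge
  constructor
  · rintro ⟨hf, hno⟩
    refine ⟨hf, fun e he hlt => ?_⟩
    by_contra hns
    exact hno ⟨e, he, hlt, isSF_iff.mpr ((swap_base_iff (isSF_iff.mp hA) he hf).mpr hns)⟩
  · rintro ⟨hf, hall⟩
    refine ⟨hf, ?_⟩
    rintro ⟨e, he, hlt, hSF⟩
    exact (swap_base_iff (isSF_iff.mp hA) he hf).mp (isSF_iff.mp hSF) (hall e he hlt)

/-- The auxiliary edge set used in the greedy criterion. -/
noncomputable def uSet (A S : Finset E) (e : E) : Finset E :=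
  A.filter (fun f => e < f) ∪ S.filter (fun f => f < e)

/-- The greedy criterion relating a forest `A` to a subset `S`. -/
def crit (ends : E → Sym2 V) (A S : Finset E) : Prop :=
  ∀ e, e ∈ A ↔ ¬ spans ends (uSet A S e) e

lemma crit_unique {A A' S : Finset E} (h1 : crit ends A S) (h2 : crit ends A' S) :
    A = A' := by
  refine Finset.ext fun e => ?_
  induction e using (wellFounded_gt (α := E)).induction with
  | _ e ih =>
    have hU : uSet A S e = uSet A' S e := by
      unfold uSet
      congr 1
      ext f
      simp only [Finset.mem_filter]
      constructor
      · rintro ⟨hf, hlt⟩; exact ⟨(ih f hlt).mp hf, hlt⟩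
      · rintro ⟨hf, hlt⟩; exact ⟨(ih f hlt).mpr hf, hlt⟩
    rw [h1 e, h2 e, hU]

lemma crit_of_triple {A I X : Finset E} (hA : IsSpanningForest ends A)
    (hIs : I ⊆ intAct ends A) (hXs : X ⊆ extAct ends A) :
    crit ends A ((A \ I) ∪ X) := by
  obtain ⟨hInd, hspall⟩ := isSF_iff.mp hA
  set S := (A \ I) ∪ X with hS
  intro e
  constructor
  · intro he hsp
    have hsub : ∀ g ∈ uSet A S e, spans ends (A.erase e) g := by
      intro g hgU
      rcases Finset.mem_union.mp hgU with hg | hg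
      · obtain ⟨hgA, hlt⟩ := Finset.mem_filter.mp hg
        exact spans_of_mem (Finset.mem_erase.mpr ⟨ne_of_gt hlt, hgA⟩)
      · obtain ⟨hgS, hlt⟩ := Finset.mem_filter.mp hg
        by_cases hgA : g ∈ A
        · exact spans_of_mem (Finset.mem_erase.mpr ⟨ne_of_lt hlt, hgA⟩)
        · have hgX : g ∈ X := by
            rcases Finset.mem_union.mp hgS with h | h
            · exact absurd (Finset.mem_sdiff.mp h).1 hgA
            · exact h
          have hact := (externallyActive_iff hA).mp
            (Finset.mem_filter.mp (hXs hgX)).2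
          exact hact.2 e he hlt
    exact hInd e he (spans_trans hsub hsp)
  · intro hns
    by_contra henA
    apply hns
    obtain ⟨C, hCA, hCsp, hCsym⟩ := exists_min_spanning (hspall e)
    have hCfund := circuit_fund hInd hCA hCsym
    have hsub : C ⊆ uSet A S e := by
      intro g hgC
      have hgA := hCA hgC
      rcases lt_trichotomy e g with hlt | heq | hgt
      · exact Finset.mem_union_left _ (Finset.mem_filter.mpr ⟨hgA, hlt⟩)
      · exact absurd (heq ▸ hgA) henA
      · have hgS : g ∈ S := by
          by_contra hgnS
          have hgI : g ∈ I := by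
            by_contra hgnI
            exact hgnS (Finset.mem_union_left _ (Finset.mem_sdiff.mpr ⟨hgA, hgnI⟩))
          have hact := (internallyActive_iff hA).mp
            (Finset.mem_filter.mp (hIs hgI)).2
          exact hCfund g hgC (hact.2 e henA hgt)
        exact Finset.mem_union_right _ (Finset.mem_filter.mpr ⟨hgS, hgt⟩)
    exact spans_mono hsub hCsp

lemma crit_indep {A S : Finset E} (h : crit ends A S) : Indep ends A := by
  intro e he hsp
  obtain ⟨C, hCA, hCsp, hCsym⟩ := exists_min_spanning hsp
  have heC : e ∉ C := fun hcon => (Finset.mem_erase.mp (hCA hcon)).1 rfl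
  set K : Finset E := insert e C with hK
  have heK : e ∈ K := Finset.mem_insert_self e C
  have hKA : K ⊆ A := by
    intro g hg
    rcases Finset.mem_insert.mp hg with rfl | hgC
    · exact he
    · exact Finset.mem_of_mem_erase (hCA hgC)
  have hKne : K.Nonempty := ⟨e, heK⟩
  set m : E := K.min' hKne with hm
  have hmK : m ∈ K := K.min'_mem hKne
  have hKspan : spans ends (K.erase m) m := by
    by_cases hme : m = e
    · have : K.erase e = C := Finset.erase_insert heC
      rw [hme, this]
      exact hme ▸ hCsp
    · have hmC : m ∈ C := by
        rcases Finset.mem_insert.mp hmK with h' | h'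
        · exact absurd h' hme
        · exact h'
      have : K.erase m = insert e (C.erase m) :=
        Finset.erase_insert_of_ne (fun h => hme h.symm)
      rw [this]
      exact hCsym m hmC
  have hsub : K.erase m ⊆ uSet A S m := by
    intro g hg
    obtain ⟨hgne, hgK⟩ := Finset.mem_erase.mp hg
    refine Finset.mem_union_left _ (Finset.mem_filter.mpr ⟨hKA hgK, ?_⟩)
    exact lt_of_le_of_ne (K.min'_le g hgK) (Ne.symm hgne)
  exact ((h m).mp (hKA hmK)) (spans_mono hsub hKspan)

lemma crit_spanning {A S : Finset E} (h : crit ends A S) : ∀ x, spans ends A x := by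
  intro x
  induction x using (wellFounded_lt (α := E)).induction with
  | _ x ih =>
    by_cases hx : x ∈ A
    · exact spans_of_mem hx
    · have hsp : spans ends (uSet A S x) x :=
        of_not_not (fun hns => hx ((h x).mpr hns))
      refine spans_trans ?_ hsp
      intro g hgU
      rcases Finset.mem_union.mp hgU with hg | hg
      · exact spans_of_mem (Finset.mem_filter.mp hg).1
      · exact ih g (Finset.mem_filter.mp hg).2

/-- The key exchange lemma for the greedy forest. -/
lemma crit_spans_erase {A S : Finset E} (h : crit ends A S) (hInd : Indep ends A)
    (hspall : ∀ x, spans ends A x) :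
    ∀ a b : E, a ∈ A → b ∉ A → ((a < b ∧ a ∉ S) ∨ (b < a ∧ b ∈ S)) →
      spans ends (A.erase a) b := by
  have main : ∀ m : E, ∀ a b : E, a ∈ A → b ∉ A →
      ((a < b ∧ a ∉ S) ∨ (b < a ∧ b ∈ S)) → max a b ≤ m → spans ends (A.erase a) b := by
    intro m
    induction m using (wellFounded_lt (α := E)).induction with
    | _ m ih =>
      intro a b ha hb hcond hmax
      rcases hcond with ⟨hab, haS⟩ | ⟨hba, hbS⟩
      · -- shape 1 : a < b, a ∉ S
        have hbm : b ≤ m := (le_max_right a b).trans hmax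
        have hspU : spans ends (uSet A S b) b :=
          of_not_not (fun hns => hb ((h b).mpr hns))
        refine spans_trans ?_ hspU
        intro g hgU
        rcases Finset.mem_union.mp hgU with hg | hg
        · obtain ⟨hgA, hlt⟩ := Finset.mem_filter.mp hg
          exact spans_of_mem (Finset.mem_erase.mpr ⟨(hab.trans hlt).ne', hgA⟩)
        · obtain ⟨hgS, hlt⟩ := Finset.mem_filter.mp hg
          by_cases hgA : g ∈ A
          · have hgne : g ≠ a := fun h' => haS (h' ▸ hgS)
            exact spans_of_mem (Finset.mem_erase.mpr ⟨hgne, hgA⟩)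
          · rcases lt_trichotomy a g with h1 | h2 | h3
            · exact ih (max a g) (lt_of_lt_of_le (max_lt hab hlt) hbm) a g ha hgA
                (Or.inl ⟨h1, haS⟩) le_rfl
            · exact absurd (h2 ▸ ha) hgA
            · exact ih (max a g) (lt_of_lt_of_le (max_lt hab hlt) hbm) a g ha hgA
                (Or.inr ⟨h3, hgS⟩) le_rfl
      · -- shape 2 : b < a, b ∈ S
        have ham : a ≤ m := (le_max_left a b).trans hmax
        by_contra hns
        obtain ⟨C, hCA, hCsp, hCsym⟩ := exists_min_spanning (hspall b)
        have hCfund := circuit_fund hInd hCA hCsym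
        have haC : a ∈ C := by
          by_contra hnaC
          refine hns (spans_mono ?_ hCsp)
          intro g hgC
          exact Finset.mem_erase.mpr ⟨fun h' => hnaC (h' ▸ hgC), hCA hgC⟩
        have hspU : spans ends (uSet A S a) a := by
          refine spans_trans ?_ (hCsym a haC)
          intro g hg
          rcases Finset.mem_insert.mp hg with rfl | hgC
          · exact spans_of_mem
              (Finset.mem_union_right _ (Finset.mem_filter.mpr ⟨hbS, hba⟩))
          · obtain ⟨hgne, hgC'⟩ := Finset.mem_erase.mp hgC
            have hgA : g ∈ A := hCA hgC'
            rcases lt_trichotomy a g with h1 | h2 | h3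
            · exact spans_of_mem
                (Finset.mem_union_left _ (Finset.mem_filter.mpr ⟨hgA, h1⟩))
            · exact absurd h2.symm hgne
            · by_cases hgS : g ∈ S
              · exact spans_of_mem
                  (Finset.mem_union_right _ (Finset.mem_filter.mpr ⟨hgS, h3⟩))
              · exfalso
                rcases lt_trichotomy g b with hh1 | hh2 | hh3
                · exact hCfund g hgC' (ih (max g b) (lt_of_lt_of_le (max_lt h3 hba) ham)
                    g b hgA hb (Or.inl ⟨hh1, hgS⟩) le_rfl)
                · exact hb (hh2 ▸ hgA)
                · exact hCfund g hgC' (ih (max g b) (lt_of_lt_of_le (max_lt h3 hba) ham)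
                    g b hgA hb (Or.inr ⟨hh3, hbS⟩) le_rfl)
        exact ((h a).mp ha) hspU
  intro a b ha hb hcond
  exact main (max a b) a b ha hb hcond le_rfl

/-- The greedy forest associated to `S`, built by scanning edges downwards. -/
noncomputable def buildMem (ends : E → Sym2 V) (S : Finset E) : E → Prop :=
  (wellFounded_gt (α := E)).fix
    (fun e ih => ¬ spans ends ((Finset.univ.filter fun f => ∃ h : e < f, ih f h) ∪
      S.filter fun f => f < e) e)

lemma buildMem_iff (S : Finset E) (e : E) : buildMem ends S e ↔
    ¬ spans ends ((Finset.univ.filter fun f => ∃ _ : e < f, buildMem ends S f) ∪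
      S.filter fun f => f < e) e := by
  unfold buildMem
  rw [WellFounded.fix_eq]

lemma build_crit (S : Finset E) : crit ends (Finset.univ.filter (buildMem ends S)) S := by
  intro e
  have hset : (Finset.univ.filter (buildMem ends S)).filter (fun f => e < f)
      = Finset.univ.filter fun f => ∃ _ : e < f, buildMem ends S f := by
    ext f
    simp only [Finset.mem_filter, Finset.mem_univ, true_and, exists_prop]
    tauto
  simp only [Finset.mem_filter, Finset.mem_univ, true_and]
  rw [buildMem_iff, uSet, hset]

end Activity

end Crapo

/-- The map `(F, A_i, A_e) ↦ (A_f \ A_i) ∪ A_e` is a bijection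
from the set of triples (spanning forest, subset of its internally active edges,
subset of its externally active edges) onto the power set `2^E`. -/
theorem activity_map_bijective {V E : Type} [Fintype V] [Fintype E] [DecidableEq E]
    [LinearOrder E] (ends : E → Sym2 V) :
    Function.Bijective
      (fun t : {t : Finset E × Finset E × Finset E //
          IsSpanningForest ends t.1 ∧ t.2.1 ⊆ intAct ends t.1 ∧ t.2.2 ⊆ extAct ends t.1} =>
        (t.val.1 \ t.val.2.1) ∪ t.val.2.2) := by
  constructor
  · -- injectivity
    rintro ⟨⟨A, I, X⟩, hSF, hIs, hXs⟩ ⟨⟨A', I', X'⟩, hSF', hIs', hXs'⟩ heq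
    simp only at heq hSF hIs hXs hSF' hIs' hXs'
    set S : Finset E := (A \ I) ∪ X with hS
    have hS' : (A' \ I') ∪ X' = S := heq.symm
    have hc : crit ends A S := crit_of_triple hSF hIs hXs
    have hc' : crit ends A' S := hS' ▸ crit_of_triple hSF' hIs' hXs'
    have hAA' : A = A' := crit_unique hc hc'
    have hIA : ∀ g ∈ I, g ∈ A := fun g hg => ((Finset.mem_filter.mp (hIs hg)).2).1
    have hXA : ∀ g ∈ X, g ∉ A := fun g hg => ((Finset.mem_filter.mp (hXs hg)).2).1
    have hIA' : ∀ g ∈ I', g ∈ A' := fun g hg => ((Finset.mem_filter.mp (hIs' hg)).2).1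
    have hXA' : ∀ g ∈ X', g ∉ A' := fun g hg => ((Finset.mem_filter.mp (hXs' hg)).2).1
    have hIrec : ∀ (B J Y : Finset E), (∀ g ∈ J, g ∈ B) → (∀ g ∈ Y, g ∉ B) →
        J = B \ ((B \ J) ∪ Y) := by
      intro B J Y hJ hY
      ext g
      simp only [Finset.mem_sdiff, Finset.mem_union]
      constructor
      · intro hg
        refine ⟨hJ g hg, ?_⟩
        rintro (hg' | hg')
        · exact hg'.2 hg
        · exact hY g hg' (hJ g hg)
      · rintro ⟨hgB, hgS⟩
        by_contra hnJ
        exact hgS (Or.inl ⟨hgB, hnJ⟩)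
    have hXrec : ∀ (B J Y : Finset E), (∀ g ∈ J, g ∈ B) → (∀ g ∈ Y, g ∉ B) →
        Y = ((B \ J) ∪ Y) \ B := by
      intro B J Y hJ hY
      ext g
      simp only [Finset.mem_sdiff, Finset.mem_union]
      constructor
      · intro hg
        exact ⟨Or.inr hg, hY g hg⟩
      · rintro ⟨hg | hg, hgB⟩
        · exact absurd hg.1 hgB
        · exact hg
    have h1 : I = A \ S := hIrec A I X hIA hXA
    have h2 : I' = A' \ S := by
      have h0 := hIrec A' I' X' hIA' hXA'
      rwa [hS'] at h0
    have h3 : X = S \ A := hXrec A I X hIA hXA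
    have h4 : X' = S \ A' := by
      have h0 := hXrec A' I' X' hIA' hXA'
      rwa [hS'] at h0
    have hII' : I = I' := by rw [h1, h2, hAA']
    have hXX' : X = X' := by rw [h3, h4, hAA']
    exact Subtype.ext (by simp only [Prod.mk.injEq]; exact ⟨hAA', hII', hXX'⟩)
  · -- surjectivity
    intro S
    set A : Finset E := Finset.univ.filter (buildMem ends S) with hA
    have hc : crit ends A S := build_crit S
    have hInd : Indep ends A := crit_indep hc
    have hspall : ∀ x, spans ends A x := crit_spanning hc
    have hSF : IsSpanningForest ends A := isSF_iff.mpr ⟨hInd, hspall⟩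
    have hIsub : A \ S ⊆ intAct ends A := by
      intro g hg
      obtain ⟨hgA, hgS⟩ := Finset.mem_sdiff.mp hg
      rw [intAct, Finset.mem_filter]
      refine ⟨Finset.mem_univ g, (internallyActive_iff hSF).mpr ⟨hgA, fun f hf hlt => ?_⟩⟩
      exact crit_spans_erase hc hInd hspall g f hgA hf (Or.inl ⟨hlt, hgS⟩)
    have hXsub : S \ A ⊆ extAct ends A := by
      intro g hg
      obtain ⟨hgS, hgA⟩ := Finset.mem_sdiff.mp hg
      rw [extAct, Finset.mem_filter]
      refine ⟨Finset.mem_univ g, (externallyActive_iff hSF).mpr ⟨hgA, fun e he hlt => ?_⟩⟩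
      exact crit_spans_erase hc hInd hspall e g he hgA (Or.inr ⟨hlt, hgS⟩)
    refine ⟨⟨(A, A \ S, S \ A), hSF, hIsub, hXsub⟩, ?_⟩
    show (A \ (A \ S)) ∪ (S \ A) = S
    ext g
    simp only [Finset.mem_union, Finset.mem_sdiff]
    tauto
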